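/- Linear convergence of entropy-regularized NPG in the bandit case: fix a finite action set A, reward vector r ∈ ℝ^A, τ > 0, and step size η with 0 < ητ < 1. Define the sequence of probability distributions π^{(t)} on A by π^{(t+1)}(a) ∝ (π^{(t)}(a))^{1−ητ} exp(η r(a)), starting from any π^{(0)} with full support. Let π*_τ = softmax(r/τ). Then for all t ≥ 0, ‖log π^{(t)} − log π*_τ‖_∞ ≤ 2(1−ητ)^t ‖log π^{(0)} − log π*_τ‖_∞. -/
import Mathlib


/-- Linear convergence of entropy-regularized NPG in the bandit case. -/
theorem bandit_npg_linear_convergence {A : Type*} [Fintype A] [Nonempty A]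
    (r : A → ℝ) (τ η : ℝ) (hτ : 0 < τ) (hη : 0 < η) (hητ : η * τ < 1)
    (π : ℕ → A → ℝ) (hpos : ∀ a, 0 < π 0 a)
    (hsum : ∀ t, ∑ a, π t a = 1)
    (hupd : ∀ t a, π (t + 1) a =
      (π t a) ^ (1 - η * τ) * Real.exp (η * r a) /
        ∑ a', (π t a') ^ (1 - η * τ) * Real.exp (η * r a')) :
    ∀ t, ‖(fun a => Real.log (π t a)) -
        (fun a => Real.log (Real.exp (r a / τ) / ∑ a', Real.exp (r a' / τ)))‖ ≤
      2 * (1 - η * τ) ^ t *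
        ‖(fun a => Real.log (π 0 a)) -
          (fun a => Real.log (Real.exp (r a / τ) / ∑ a', Real.exp (r a' / τ)))‖ := by
  have hk0 : (0:ℝ) < 1 - η * τ := by linarith
  have hZ : (0:ℝ) < ∑ a', Real.exp (r a' / τ) :=
    Finset.sum_pos (fun a _ => Real.exp_pos _) Finset.univ_nonempty
  set p : A → ℝ := fun a => Real.exp (r a / τ) / ∑ a', Real.exp (r a' / τ) with hp
  have hppos : ∀ a, 0 < p a := fun a => div_pos (Real.exp_pos _) hZ
  have hpsum : ∑ a, p a = 1 := by
    rw [hp, ← Finset.sum_div, div_self (ne_of_gt hZ)]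
  have hπpos : ∀ t a, 0 < π t a := by
    intro t
    induction t with
    | zero => exact hpos
    | succ n ih =>
      intro a
      rw [hupd]
      have hS : 0 < ∑ a', (π n a') ^ (1 - η * τ) * Real.exp (η * r a') :=
        Finset.sum_pos (fun a' _ => mul_pos (Real.rpow_pos_of_pos (ih a') _)
          (Real.exp_pos _)) Finset.univ_nonempty
      exact div_pos (mul_pos (Real.rpow_pos_of_pos (ih a) _) (Real.exp_pos _)) hS
  set δ : ℕ → A → ℝ := fun t a => Real.log (π t a) - Real.log (p a) with hδ
  have hlogp : ∀ a, Real.log (p a) = r a / τ - Real.log (∑ a', Real.exp (r a' / τ)) := by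
    intro a
    rw [hp]
    rw [Real.log_div (Real.exp_ne_zero _) (ne_of_gt hZ), Real.log_exp]
  have key : ∀ t, ∃ C : ℝ, ∀ a, δ t a = (1 - η * τ) ^ t * δ 0 a + C := by
    intro t
    induction t with
    | zero => exact ⟨0, fun a => by simp⟩
    | succ n ih =>
      obtain ⟨C, hC⟩ := ih
      have hSpos : 0 < ∑ a', (π n a') ^ (1 - η * τ) * Real.exp (η * r a') :=
        Finset.sum_pos (fun a' _ => mul_pos (Real.rpow_pos_of_pos (hπpos n a') _)
          (Real.exp_pos _)) Finset.univ_nonempty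
      refine ⟨(1 - η * τ) * C + (η * τ * Real.log (∑ a', Real.exp (r a' / τ)) -
        Real.log (∑ a', (π n a') ^ (1 - η * τ) * Real.exp (η * r a'))), fun a => ?_⟩
      have h1 : Real.log (π (n+1) a) = (1 - η * τ) * Real.log (π n a) + η * r a -
          Real.log (∑ a', (π n a') ^ (1 - η * τ) * Real.exp (η * r a')) := by
        rw [hupd, Real.log_div (ne_of_gt (mul_pos (Real.rpow_pos_of_pos (hπpos n a) _)
            (Real.exp_pos _))) (ne_of_gt hSpos),
          Real.log_mul (ne_of_gt (Real.rpow_pos_of_pos (hπpos n a) _)) (Real.exp_ne_zero _),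
          Real.log_rpow (hπpos n a), Real.log_exp]
      have h2 := hC a
      simp only [hδ] at h2 ⊢
      have hlogn : Real.log (π n a) = (1 - η * τ) ^ n *
          (Real.log (π 0 a) - Real.log (p a)) + C + Real.log (p a) := by linarith
      rw [h1, hlogn, hlogp a]
      field_simp
      ring
  have sign : ∀ t, (∃ a, 0 ≤ δ t a) ∧ (∃ a, δ t a ≤ 0) := by
    intro t
    constructor
    · by_contra h
      push_neg at h
      have hlt : ∑ a, π t a < ∑ a, p a := by
        refine Finset.sum_lt_sum_of_nonempty Finset.univ_nonempty (fun a _ => ?_)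
        have h3 : Real.log (π t a) < Real.log (p a) := by
          have := h a; simp only [hδ] at this; linarith
        exact (Real.log_lt_log_iff (hπpos t a) (hppos a)).mp h3
      rw [hsum, hpsum] at hlt
      exact lt_irrefl 1 hlt
    · by_contra h
      push_neg at h
      have hlt : ∑ a, p a < ∑ a, π t a := by
        refine Finset.sum_lt_sum_of_nonempty Finset.univ_nonempty (fun a _ => ?_)
        have h3 : Real.log (p a) < Real.log (π t a) := by
          have := h a; simp only [hδ] at this; linarith
        exact (Real.log_lt_log_iff (hppos a) (hπpos t a)).mp h3
      rw [hsum, hpsum] at hlt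
      exact lt_irrefl 1 hlt
  intro t
  obtain ⟨C, hC⟩ := key t
  obtain ⟨⟨ap, hap⟩, ⟨am, ham⟩⟩ := sign t
  have hN : ∀ a, |δ 0 a| ≤ ‖(fun a => Real.log (π 0 a)) -
      (fun a => Real.log (Real.exp (r a / τ) / ∑ a', Real.exp (r a' / τ)))‖ := by
    intro a
    have := norm_le_pi_norm ((fun a => Real.log (π 0 a)) -
      (fun a => Real.log (Real.exp (r a / τ) / ∑ a', Real.exp (r a' / τ)))) a
    simpa [hδ, hp, Real.norm_eq_abs] using this
  set N := ‖(fun a => Real.log (π 0 a)) -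
      (fun a => Real.log (Real.exp (r a / τ) / ∑ a', Real.exp (r a' / τ)))‖ with hNdef
  have hkt : (0:ℝ) ≤ (1 - η * τ) ^ t := pow_nonneg hk0.le t
  have hCbound : |C| ≤ (1 - η * τ) ^ t * N := by
    rw [abs_le]
    constructor
    · have h1 := hC ap
      have h2 := hN ap
      have h3 : (1 - η * τ) ^ t * δ 0 ap ≤ (1 - η * τ) ^ t * N := by
        apply mul_le_mul_of_nonneg_left _ hkt
        exact (abs_le.mp h2).2
      linarith
    · have h1 := hC am
      have h2 := hN am
      have h3 : -((1 - η * τ) ^ t * N) ≤ (1 - η * τ) ^ t * δ 0 am := by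
        rw [← mul_neg]
        apply mul_le_mul_of_nonneg_left _ hkt
        exact (abs_le.mp h2).1
      linarith
  have hmain : ∀ a, |δ t a| ≤ 2 * (1 - η * τ) ^ t * N := by
    intro a
    rw [hC a]
    calc |(1 - η * τ) ^ t * δ 0 a + C| ≤ |(1 - η * τ) ^ t * δ 0 a| + |C| := abs_add_le _ _
      _ = (1 - η * τ) ^ t * |δ 0 a| + |C| := by
          rw [abs_mul, abs_of_nonneg hkt]
      _ ≤ (1 - η * τ) ^ t * N + (1 - η * τ) ^ t * N := by
          have := mul_le_mul_of_nonneg_left (hN a) hkt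
          linarith
      _ = 2 * (1 - η * τ) ^ t * N := by ring
  have hnonneg : (0:ℝ) ≤ 2 * (1 - η * τ) ^ t * N :=
    mul_nonneg (mul_nonneg (by norm_num) hkt) (norm_nonneg _)
  rw [pi_norm_le_iff_of_nonneg hnonneg]
  intro a
  have := hmain a
  simpa [hδ, hp, Real.norm_eq_abs] using this
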